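/- Theorem 3 (core Lyapunov inequality for global cooperation). Assume β v > 0 and β v > ρ · k v for every player v. Then for every strategy profile x with x v ∈ (0,1] for all v and x ≠ 𝟙, one has ∑_v (x v − 1) · (G v x − β v · f (x v)) < 0. -/

import Mathlib

/-- Theorem 3 (core Lyapunov inequality for global cooperation). If `β v > 0` and
`β v > ρ * k v` for every player, then for every strategy profile `x` with
`x v ∈ (0,1]` for all `v` and `x ≠ 𝟙`, one has
`∑ v, (x v - 1) * (G v x - β v * f (x v)) < 0`. -/
theorem srEgn_lyapunov_inequality
    (N : ℕ) (hN : 1 ≤ N)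
    (A : Fin N → Fin N → ℝ)
    (hA01 : ∀ v w, A v w = 0 ∨ A v w = 1)
    (hAdiag : ∀ v, A v v = 0)
    (σC σD : ℝ) (hσC : σC < 0) (hσD : 0 < σD)
    (β : Fin N → ℝ)
    (k : Fin N → ℝ) (hk : ∀ v, k v = ∑ w, A v w)
    (G : Fin N → (Fin N → ℝ) → ℝ)
    (hG : ∀ v x, G v x = ∑ w, A v w * ((σC + σD) * x w - σD))
    (f : ℝ → ℝ) (hf : ∀ y, f y = (σC + σD) * y - σD)
    (ψ ξ ρ : ℝ) (hψ : ψ = min σC (-σD)) (hξ : ξ = max σC (-σD)) (hρ : ρ = ψ / ξ)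
    (hβpos : ∀ v, 0 < β v) (hβ : ∀ v, β v > ρ * k v)
    (x : Fin N → ℝ) (hx : ∀ v, x v ∈ Set.Ioc (0 : ℝ) 1)
    (hxne : x ≠ fun _ => 1) :
    ∑ v, (x v - 1) * (G v x - β v * f (x v)) < 0 := by
  have hξneg : ξ < 0 := by rw [hξ]; exact max_lt hσC (neg_lt_zero.mpr hσD)
  have hψσC : ψ ≤ σC := by rw [hψ]; exact min_le_left _ _
  have hψσD : ψ ≤ -σD := by rw [hψ]; exact min_le_right _ _
  have hσCξ : σC ≤ ξ := by rw [hξ]; exact le_max_left _ _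
  have hσDξ : -σD ≤ ξ := by rw [hξ]; exact le_max_right _ _
  have hA0 : ∀ v w, 0 ≤ A v w := fun v w => by rcases hA01 v w with h | h <;> simp [h]
  have hk0 : ∀ v, 0 ≤ k v := fun v => by
    rw [hk]; exact Finset.sum_nonneg fun w _ => hA0 v w
  have he : ∀ v, x v - 1 ≤ 0 := fun v => by linarith [(hx v).2]
  have hfψ : ∀ w, ψ ≤ f (x w) := by
    intro w
    obtain ⟨h0, h1⟩ := hx w
    rw [hf]
    nlinarith [mul_nonneg (sub_nonneg.mpr h1) (sub_nonneg.mpr hψσD),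
      mul_nonneg h0.le (sub_nonneg.mpr hψσC)]
  have hfξ : ∀ w, f (x w) ≤ ξ := by
    intro w
    obtain ⟨h0, h1⟩ := hx w
    rw [hf]
    nlinarith [mul_nonneg (sub_nonneg.mpr h1) (sub_nonneg.mpr hσDξ),
      mul_nonneg h0.le (sub_nonneg.mpr hσCξ)]
  have hcoef : ∀ v, ξ * β v < ψ * k v := by
    intro v
    calc ξ * β v < ξ * (ρ * k v) := mul_lt_mul_of_neg_left (hβ v) hξneg
      _ = ψ * k v := by
        rw [hρ]; field_simp
        rw [mul_assoc]; exact mul_div_cancel_left₀ _ hξneg.ne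
  have key : ∀ v, (x v - 1) * (G v x - β v * f (x v)) ≤ (x v - 1) * (ψ * k v - ξ * β v) := by
    intro v
    have hG1 : (x v - 1) * G v x ≤ (x v - 1) * (ψ * k v) := by
      rw [hG, hk, Finset.mul_sum]
      have hrhs : (x v - 1) * (ψ * ∑ w, A v w) = ∑ w, (x v - 1) * (ψ * A v w) := by
        rw [Finset.mul_sum, Finset.mul_sum]
      rw [hrhs]
      apply Finset.sum_le_sum
      intro w _
      have hfw : (x v - 1) * f (x w) ≤ (x v - 1) * ψ :=
        mul_le_mul_of_nonpos_left (hfψ w) (he v)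
      calc (x v - 1) * (A v w * ((σC + σD) * x w - σD))
          = A v w * ((x v - 1) * f (x w)) := by rw [hf]; ring
        _ ≤ A v w * ((x v - 1) * ψ) := mul_le_mul_of_nonneg_left hfw (hA0 v w)
        _ = (x v - 1) * (ψ * A v w) := by ring
    have hD : β v * ((x v - 1) * ξ) ≤ β v * ((x v - 1) * f (x v)) :=
      mul_le_mul_of_nonneg_left (mul_le_mul_of_nonpos_left (hfξ v) (he v)) (hβpos v).le
    have expand : (x v - 1) * (G v x - β v * f (x v))
        = (x v - 1) * G v x - β v * ((x v - 1) * f (x v)) := by ring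
    have expand2 : (x v - 1) * (ψ * k v - ξ * β v)
        = (x v - 1) * (ψ * k v) - β v * ((x v - 1) * ξ) := by ring
    rw [expand, expand2]
    linarith
  obtain ⟨v0, hv0⟩ : ∃ v, x v ≠ 1 := by
    by_contra h
    push_neg at h
    exact hxne (funext h)
  have hv0lt : x v0 - 1 < 0 := lt_of_le_of_ne (he v0) (fun h => hv0 (by linarith [sub_eq_zero.mp h]))
  have hneg : ∀ v, (x v - 1) * (ψ * k v - ξ * β v) ≤ 0 := fun v =>
    mul_nonpos_iff.mpr (Or.inr ⟨he v, by linarith [hcoef v]⟩)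
  have hstrict : (x v0 - 1) * (ψ * k v0 - ξ * β v0) < 0 :=
    mul_neg_of_neg_of_pos hv0lt (by linarith [hcoef v0])
  calc ∑ v, (x v - 1) * (G v x - β v * f (x v))
      ≤ ∑ v, (x v - 1) * (ψ * k v - ξ * β v) := Finset.sum_le_sum fun v _ => key v
    _ < 0 := by
        have h := Finset.sum_lt_sum (fun v (_ : v ∈ Finset.univ) => hneg v)
          ⟨v0, Finset.mem_univ v0, hstrict⟩
        simpa using h
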